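/- arXiv:2212.10237 — 5 statements merged into one kernel-verified Lean document; each statement's English description precedes it below -/
import Mathlib

section
/- Let X be a type, f : X → X a map, and a : ℕ → X → ℝ a subadditive cocycle over f, i.e. a (n+s) x ≤ a n (f^[s] x) + a s x for all integers n ≥ 1, s ≥ 1 and all x ∈ X. Let m ≥ 1 be an integer and D ≥ 0 a real number such that 0 ≤ a s x ≤ D for all integers s with 1 ≤ s ≤ m and all x ∈ X. Let F : X → ℝ satisfy F x ≥ a m x and F x ≥ 0 for all x ∈ X. Then for every integer n ≥ 1 and every x ∈ X one has m · (a n x) ≤ (∑_{l=0}^{n-1} F (f^[l] x)) + 3 · m · D. -/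
/-- If `a` is a subadditive cocycle over `f`, `m ≥ 1`, `0 ≤ a s x ≤ D`
for `1 ≤ s ≤ m`, and `F` is a nonnegative function with `F x ≥ a m x`, then for every
`n ≥ 1` and every `x`:
`m * (a n x) ≤ (∑_{l=0}^{n-1} F (f^[l] x)) + 3 * m * D`. -/
theorem subadditive_cocycle_birkhoff_bound
    {X : Type*} (f : X → X) (a : ℕ → X → ℝ)
    (hsub : ∀ n s : ℕ, 1 ≤ n → 1 ≤ s → ∀ x, a (n + s) x ≤ a n (f^[s] x) + a s x)
    (m : ℕ) (hm : 1 ≤ m) (D : ℝ) (hD : 0 ≤ D)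
    (hbound : ∀ s : ℕ, 1 ≤ s → s ≤ m → ∀ x, 0 ≤ a s x ∧ a s x ≤ D)
    (F : X → ℝ) (hF : ∀ x, a m x ≤ F x) (hF0 : ∀ x, 0 ≤ F x) :
    ∀ n : ℕ, 1 ≤ n → ∀ x,
      (m : ℝ) * a n x ≤ (∑ l ∈ Finset.range n, F (f^[l] x)) + 3 * m * D := by
  intro n hn x
  have hm' : 0 < m := hm
  have hS0 : 0 ≤ ∑ l ∈ Finset.range n, F (f^[l] x) :=
    Finset.sum_nonneg fun l _ => hF0 _
  have hmD : 0 ≤ (m : ℝ) * D := mul_nonneg (by positivity) hD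
  -- block decomposition lemma
  have block : ∀ q t : ℕ, 1 ≤ t → t ≤ m → ∀ y,
      a (q * m + t) y ≤ (∑ i ∈ Finset.range q, F (f^[i * m] y)) + D := by
    intro q
    induction q with
    | zero => intro t h1 h2 y; simpa using (hbound t h1 h2 y).2
    | succ q ih =>
      intro t h1 h2 y
      have h1' : 1 ≤ q * m + t := le_trans h1 (Nat.le_add_left _ _)
      have key : a ((q + 1) * m + t) y ≤ a (q * m + t) (f^[m] y) + a m y := by
        have e : (q + 1) * m + t = (q * m + t) + m := by ring
        rw [e]; exact hsub (q * m + t) m h1' hm y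
      have step : a ((q + 1) * m + t) y ≤
          ((∑ i ∈ Finset.range q, F (f^[i * m] (f^[m] y))) + D) + F y :=
        key.trans (add_le_add (ih t h1 h2 _) (hF y))
      refine step.trans (le_of_eq ?_)
      have e2 : ∀ i : ℕ, f^[i * m] (f^[m] y) = f^[(i + 1) * m] y := by
        intro i
        rw [show (i + 1) * m = i * m + m by ring, Function.iterate_add_apply]
      rw [Finset.sum_range_succ']
      simp only [e2, Nat.zero_mul, Function.iterate_zero_apply]
      ring
  -- main case split
  rcases le_or_gt n m with hnm | hnm
  · -- small n : a n x ≤ D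
    have h1 := (hbound n hn hnm x).2
    have : (m : ℝ) * a n x ≤ (m : ℝ) * D :=
      mul_le_mul_of_nonneg_left h1 (by positivity)
    nlinarith
  · -- n ≥ m + 1
    have hnm' : m + 1 ≤ n := hnm
    set Q : ℕ → ℕ := fun r => (n - r - 2) / m with hQ
    -- per-shift bound
    have per : ∀ r, r < m →
        a n x ≤ (∑ i ∈ Finset.range (Q r), F (f^[(r + 1) + i * m] x)) + D + D := by
      intro r hr
      have hk1 : 1 ≤ n - (r + 1) := by omega
      have hdm := Nat.div_add_mod (n - r - 2) m
      have htlt : (n - r - 2) % m < m := Nat.mod_lt _ hm'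
      rw [mul_comm] at hdm
      have hdecomp : Q r * m + ((n - r - 2) % m + 1) = n - (r + 1) := by
        rw [hQ]; simp only; omega
      have ht1 : 1 ≤ (n - r - 2) % m + 1 := by omega
      have ht2 : (n - r - 2) % m + 1 ≤ m := by omega
      have hb := block (Q r) ((n - r - 2) % m + 1) ht1 ht2 (f^[r + 1] x)
      rw [hdecomp] at hb
      have hsubs := hsub (n - (r + 1)) (r + 1) hk1 (by omega) x
      rw [show (n - (r + 1)) + (r + 1) = n by omega] at hsubs
      have har : a (r + 1) x ≤ D := (hbound (r + 1) (by omega) (by omega) x).2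
      have hit : ∀ i : ℕ, f^[i * m] (f^[r + 1] x) = f^[(r + 1) + i * m] x := by
        intro i
        rw [add_comm (r + 1) (i * m)]
        exact (Function.iterate_add_apply f (i * m) (r + 1) x).symm
      calc a n x ≤ a (n - (r + 1)) (f^[r + 1] x) + a (r + 1) x := hsubs
        _ ≤ ((∑ i ∈ Finset.range (Q r), F (f^[i * m] (f^[r + 1] x))) + D) + D :=
            add_le_add hb har
        _ = (∑ i ∈ Finset.range (Q r), F (f^[(r + 1) + i * m] x)) + D + D := by
            simp only [hit]
    -- disjoint blocks
    set T : ℕ → Finset ℕ := fun r => (Finset.range (Q r)).image (fun i => (r + 1) + i * m)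
      with hT
    have hBT : ∀ r, ∑ i ∈ Finset.range (Q r), F (f^[(r + 1) + i * m] x)
        = ∑ l ∈ T r, F (f^[l] x) := by
      intro r
      rw [hT]
      rw [Finset.sum_image]
      intro i _ j _ h
      exact Nat.eq_of_mul_eq_mul_right hm' (Nat.add_left_cancel h)
    have f1 : ∀ s, s < m → (s + 1) % m = if s + 1 = m then 0 else s + 1 := by
      intro s hs
      rcases eq_or_lt_of_le (show s + 1 ≤ m from hs) with h | h
      · simp [h]
      · rw [if_neg (by omega), Nat.mod_eq_of_lt h]
    have hdisj : (↑(Finset.range m) : Set ℕ).PairwiseDisjoint T := by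
      intro r hr r' hr' hne
      simp only [Finset.coe_range, Set.mem_Iio] at hr hr'
      refine Finset.disjoint_left.mpr ?_
      intro l hl hl'
      simp only [hT, Finset.mem_image, Finset.mem_range] at hl hl'
      obtain ⟨i, hi, rfl⟩ := hl
      obtain ⟨i', hi', he⟩ := hl'
      apply hne
      have h2 : ((r + 1) + i * m) % m = (r + 1) % m := Nat.add_mul_mod_self_right _ _ _
      rw [← he, Nat.add_mul_mod_self_right] at h2
      rw [f1 r hr, f1 r' hr'] at h2
      split_ifs at h2 <;> omega
    have hsubset : (Finset.range m).biUnion T ⊆ Finset.range n := by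
      intro l hl
      simp only [Finset.mem_biUnion, hT, Finset.mem_image, Finset.mem_range] at hl
      obtain ⟨r, hr, i, hi, rfl⟩ := hl
      have h1 : (i + 1) * m ≤ Q r * m := Nat.mul_le_mul_right m hi
      have h2 : Q r * m ≤ n - r - 2 := Nat.div_mul_le_self _ m
      have h3 : i * m + m ≤ n - r - 2 := by
        calc i * m + m = (i + 1) * m := by ring
          _ ≤ Q r * m := h1
          _ ≤ n - r - 2 := h2
      simp only [Finset.mem_range]
      omega
    have hle : ∑ r ∈ Finset.range m, ∑ i ∈ Finset.range (Q r), F (f^[(r + 1) + i * m] x)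
        ≤ ∑ l ∈ Finset.range n, F (f^[l] x) := by
      calc ∑ r ∈ Finset.range m, ∑ i ∈ Finset.range (Q r), F (f^[(r + 1) + i * m] x)
          = ∑ l ∈ (Finset.range m).biUnion T, F (f^[l] x) := by
            rw [Finset.sum_biUnion hdisj]
            exact Finset.sum_congr rfl fun r _ => hBT r
        _ ≤ _ := Finset.sum_le_sum_of_subset_of_nonneg hsubset fun l _ _ => hF0 _
    have key : (m : ℝ) * a n x ≤
        (∑ r ∈ Finset.range m, ∑ i ∈ Finset.range (Q r), F (f^[(r + 1) + i * m] x))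
          + m * D + m * D := by
      have h1 : ∑ r ∈ Finset.range m, a n x = (m : ℝ) * a n x := by
        simp [Finset.sum_const, nsmul_eq_mul]
      rw [← h1]
      have h2 := Finset.sum_le_sum fun r hr => per r (Finset.mem_range.mp hr)
      refine h2.trans (le_of_eq ?_)
      simp [Finset.sum_add_distrib, Finset.sum_const, nsmul_eq_mul]
    nlinarith [key, hle]
end

section
/- Let X be a compact metric space, f : X → X a Borel measurable map, and μ an f-invariant Borel probability measure on X. Assume that μ satisfies exponential large deviations for Lipschitz observables. Let a : ℕ → X → ℝ satisfy: (i) a (n+s) x ≤ a n (f^[s] x) + a s x for all integers n ≥ 1, s ≥ 1 and all x ∈ X; (ii) there is a constant C₀ ≥ 0 such that 0 ≤ a n x ≤ n · C₀ for all n ≥ 1 and x ∈ X; (iii) for every n ≥ 1 the function x ↦ a n x is upper semicontinuous on X. Set λ = inf over integers n ≥ 1 of (1/n) ∫ a n dμ. Then for every ε > 0 there exist constants C > 0 and c > 0 such that μ { x ∈ X : a n x ≥ n · (λ + ε) } ≤ C · Real.exp (−c · n) for all integers n ≥ 1. -/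
open MeasureTheory

open MeasureTheory Filter

/-- Any bounded measurable function is integrable w.r.t. a finite measure. -/
lemma aux_integrable_of_bounds {X : Type*} [MeasurableSpace X]
    (μ : Measure X) [IsFiniteMeasure μ] {g : X → ℝ} {M : ℝ}
    (hmeas : Measurable g) (h0 : ∀ x, 0 ≤ g x) (hM : ∀ x, g x ≤ M) :
    Integrable g μ :=
  ⟨hmeas.aestronglyMeasurable, HasFiniteIntegral.of_bounded (C := M)
    (Filter.Eventually.of_forall fun x => by
      rw [Real.norm_eq_abs, abs_of_nonneg (h0 x)]; exact hM x)⟩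

/-- Lipschitz approximation from above of a bounded USC function, with integral control. -/
lemma aux_usc_approx {X : Type*} [MetricSpace X] [Nonempty X] [MeasurableSpace X] [BorelSpace X]
    (μ : Measure X) [IsFiniteMeasure μ] (g : X → ℝ) (hg : UpperSemicontinuous g)
    (M : ℝ) (h0 : ∀ x, 0 ≤ g x) (hM : ∀ x, g x ≤ M) {δ : ℝ} (hδ : 0 < δ) :
    ∃ F : X → ℝ, (∃ K : NNReal, LipschitzWith K F) ∧ (∀ x, g x ≤ F x) ∧
      ∫ x, F x ∂μ ≤ (∫ x, g x ∂μ) + δ := by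
  set F : ℕ → X → ℝ := fun n x => ⨆ y, (g y - n * dist x y) with hF
  have hbdd : ∀ (n : ℕ) (x : X), BddAbove (Set.range fun y => g y - n * dist x y) := by
    intro n x
    refine ⟨M, ?_⟩
    rintro _ ⟨y, rfl⟩
    have h1 := hM y
    have h2 : (0:ℝ) ≤ n * dist x y := by positivity
    simp only; linarith
  have hgF : ∀ (n : ℕ) (x : X), g x ≤ F n x := by
    intro n x
    have := le_ciSup (hbdd n x) x
    simpa using this
  have hFM : ∀ (n : ℕ) (x : X), F n x ≤ M := by
    intro n x
    refine ciSup_le fun y => ?_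
    have h1 := hM y
    have h2 : (0:ℝ) ≤ n * dist x y := by positivity
    linarith
  have hkey : ∀ (n : ℕ) (x x' : X), F n x ≤ F n x' + n * dist x x' := by
    intro n x x'
    refine ciSup_le fun y => ?_
    have h1 : g y - n * dist x' y ≤ F n x' := le_ciSup (hbdd n x') y
    have h2 : dist x' y ≤ dist x' x + dist x y := dist_triangle _ _ _
    have h3 : (0:ℝ) ≤ n := Nat.cast_nonneg n
    have h4 : dist x' x = dist x x' := dist_comm _ _
    nlinarith
  have hlip : ∀ n : ℕ, LipschitzWith n (F n) := by
    intro n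
    refine LipschitzWith.of_dist_le_mul fun x x' => ?_
    rw [Real.dist_eq, abs_sub_le_iff]
    constructor
    · have := hkey n x x'
      push_cast
      linarith
    · have := hkey n x' x
      rw [dist_comm x' x] at this
      push_cast
      linarith
  have htend : ∀ x : X, Tendsto (fun n => F n x) atTop (nhds (g x)) := by
    intro x
    refine tendsto_order.2 ⟨fun b hb => Eventually.of_forall fun n => lt_of_lt_of_le hb (hgF n x),
      fun b hb => ?_⟩
    set δ' : ℝ := (b - g x) / 2 with hδ'
    have hδ'pos : 0 < δ' := by simp only [hδ']; linarith
    have husc := hg x (g x + δ') (by linarith)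
    rw [Metric.eventually_nhds_iff] at husc
    obtain ⟨r, hr, hball⟩ := husc
    rw [eventually_atTop]
    refine ⟨⌈(M - g x - δ') / r⌉₊ + 1, fun n hn => ?_⟩
    have hnr : M - g x - δ' < n * r := by
      have h1 : (M - g x - δ') / r ≤ (⌈(M - g x - δ') / r⌉₊ : ℝ) := Nat.le_ceil _
      have h2 : ((⌈(M - g x - δ') / r⌉₊ : ℝ)) < n := by
        have := hn
        exact_mod_cast Nat.lt_of_succ_le this
      have h3 : (M - g x - δ') / r < n := lt_of_le_of_lt h1 h2
      calc M - g x - δ' = ((M - g x - δ') / r) * r := by field_simp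
        _ < n * r := by apply mul_lt_mul_of_pos_right h3 hr
    have hFle : F n x ≤ g x + δ' := by
      refine ciSup_le fun y => ?_
      by_cases hy : dist y x < r
      · have := hball hy
        have h2 : (0:ℝ) ≤ n * dist x y := by positivity
        linarith
      · push_neg at hy
        have h1 := hM y
        have h2 : (n:ℝ) * r ≤ n * dist x y := by
          apply mul_le_mul_of_nonneg_left _ (Nat.cast_nonneg n)
          rw [dist_comm]; exact hy
        linarith
    have : F n x < b := lt_of_le_of_lt hFle (by simp only [hδ']; linarith)
    exact this
  -- dominated convergence
  have hgmeas : Measurable g := hg.measurable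
  have hgint : Integrable g μ := aux_integrable_of_bounds μ hgmeas h0 hM
  have hFint : ∀ n : ℕ, Integrable (F n) μ := fun n =>
    aux_integrable_of_bounds μ (hlip n).continuous.measurable
      (fun x => le_trans (h0 x) (hgF n x)) (hFM n)
  have htendint : Tendsto (fun n => ∫ x, F n x ∂μ) atTop (nhds (∫ x, g x ∂μ)) := by
    refine tendsto_integral_of_dominated_convergence (fun _ => M)
      (fun n => (hFint n).aestronglyMeasurable) ?_ ?_ ?_
    · exact integrable_const M
    · intro n
      refine Eventually.of_forall fun x => ?_
      rw [Real.norm_eq_abs, abs_of_nonneg (le_trans (h0 x) (hgF n x))]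
      exact hFM n x
    · exact Eventually.of_forall htend
  have hev : ∀ᶠ n in atTop, ∫ x, F n x ∂μ < (∫ x, g x ∂μ) + δ :=
    htendint.eventually_lt_const (by linarith)
  obtain ⟨n, hn⟩ := hev.exists
  exact ⟨F n, ⟨n, hlip n⟩, hgF n, hn.le⟩

open Finset

/-- Iterated subadditivity: peeling off blocks of length `N`. -/
lemma aux_dec {X : Type*} (f : X → X) (a : ℕ → X → ℝ) (N : ℕ) (hN : 1 ≤ N)
    (hsub : ∀ n s : ℕ, 1 ≤ n → 1 ≤ s → ∀ x, a (n + s) x ≤ a n (f^[s] x) + a s x) :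
    ∀ q r : ℕ, 1 ≤ r → ∀ x, a (q * N + r) x ≤
      (∑ k ∈ Finset.range q, a N (f^[k * N] x)) + a r (f^[q * N] x) := by
  intro q
  induction q with
  | zero => intro r hr x; simp
  | succ q ih =>
    intro r hr x
    have heq : (q + 1) * N + r = (q * N + r) + N := by ring
    have h1 : a ((q * N + r) + N) x ≤ a (q * N + r) (f^[N] x) + a N x :=
      hsub (q * N + r) N (le_trans hr (Nat.le_add_left r (q * N))) hN x
    have h2 := ih r hr (f^[N] x)
    have hsum : ∑ k ∈ Finset.range q, a N (f^[k * N] (f^[N] x)) =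
        ∑ k ∈ Finset.range q, a N (f^[(k + 1) * N] x) := by
      refine Finset.sum_congr rfl fun k _ => ?_
      congr 1
      rw [← Function.iterate_add_apply]
      congr 1
      ring
    have hiter : f^[q * N] (f^[N] x) = f^[(q + 1) * N] x := by
      rw [← Function.iterate_add_apply]
      congr 1
      ring
    rw [hsum, hiter] at h2
    have htarget : ∑ k ∈ Finset.range (q + 1), a N (f^[k * N] x) =
        (∑ k ∈ Finset.range q, a N (f^[(k + 1) * N] x)) + a N (f^[0 * N] x) :=
      Finset.sum_range_succ' _ q
    rw [heq, htarget]
    simp only [Nat.zero_mul, Function.iterate_zero_apply]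
    linarith

/-- Key inequality: `N * a n x ≤ Birkhoff sum of a N + 2 N² C₀` for `n ≥ N`. -/
lemma aux_key {X : Type*} (f : X → X) (a : ℕ → X → ℝ) (N : ℕ) (C₀ : ℝ)
    (hN : 1 ≤ N) (hC₀ : 0 ≤ C₀)
    (hsub : ∀ n s : ℕ, 1 ≤ n → 1 ≤ s → ∀ x, a (n + s) x ≤ a n (f^[s] x) + a s x)
    (hbd : ∀ n : ℕ, 1 ≤ n → ∀ x, 0 ≤ a n x ∧ a n x ≤ n * C₀) :
    ∀ n : ℕ, N ≤ n → ∀ x, (N : ℝ) * a n x ≤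
      (∑ l ∈ Finset.range n, a N (f^[l] x)) + 2 * N * N * C₀ := by
  intro n hn x
  set Q : ℕ → ℕ := fun j => (n - j - 1) / N with hQ
  set R : ℕ → ℕ := fun j => (n - j - 1) % N + 1 with hR
  have hmod : ∀ j, j < N → Q j * N + R j = n - j := by
    intro j hj
    have hd := Nat.div_add_mod (n - j - 1) N
    simp only [hQ, hR]
    rw [Nat.mul_comm]
    omega
  have hR1 : ∀ j, 1 ≤ R j := fun j => Nat.le_add_left 1 _
  have hRN : ∀ j, R j ≤ N := by
    intro j
    have := Nat.mod_lt (n - j - 1) (show 0 < N by omega)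
    simp only [hR]
    omega
  -- Step A
  have stepA : ∀ j, j < N → a n x ≤
      (∑ k ∈ Finset.range (Q j), a N (f^[k * N + j] x)) + 2 * (N * C₀) := by
    intro j hj
    have hdec := aux_dec f a N hN hsub (Q j) (R j) (hR1 j) (f^[j] x)
    have hsum : ∑ k ∈ Finset.range (Q j), a N (f^[k * N] (f^[j] x)) =
        ∑ k ∈ Finset.range (Q j), a N (f^[k * N + j] x) := by
      refine Finset.sum_congr rfl fun k _ => ?_
      congr 1
      rw [← Function.iterate_add_apply]
    have hiter : f^[Q j * N] (f^[j] x) = f^[Q j * N + j] x :=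
      (Function.iterate_add_apply f (Q j * N) j x).symm
    rw [hsum, hiter] at hdec
    have hbr : a (R j) (f^[Q j * N + j] x) ≤ N * C₀ := by
      have h1 := (hbd (R j) (hR1 j) (f^[Q j * N + j] x)).2
      have h2 : ((R j : ℝ)) ≤ (N : ℝ) := by exact_mod_cast hRN j
      nlinarith
    rcases Nat.eq_zero_or_pos j with hj0 | hj1
    · subst hj0
      have heq : Q 0 * N + R 0 = n := by have := hmod 0 hj; omega
      rw [heq] at hdec
      simp only [Function.iterate_zero_apply] at hdec
      have hNC : (0:ℝ) ≤ N * C₀ := by positivity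
      linarith
    · have hmj : 1 ≤ n - j := by omega
      have hsplit : a ((n - j) + j) x ≤ a (n - j) (f^[j] x) + a j x :=
        hsub (n - j) j hmj hj1 x
      have heqn : (n - j) + j = n := by omega
      rw [heqn] at hsplit
      have heq : Q j * N + R j = n - j := hmod j hj
      rw [heq] at hdec
      have hja : a j x ≤ N * C₀ := by
        have h1 := (hbd j hj1 x).2
        have h2 : ((j : ℝ)) ≤ (N : ℝ) := by exact_mod_cast hj.le
        nlinarith
      linarith
  -- Step B
  have hg0 : ∀ l : ℕ, 0 ≤ a N (f^[l] x) := fun l => (hbd N hN (f^[l] x)).1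
  set S : Finset ℕ :=
    (Finset.range N).biUnion (fun j => (Finset.range (Q j)).image (fun k => k * N + j)) with hS
  have hdisj : (↑(Finset.range N) : Set ℕ).PairwiseDisjoint
      (fun j => (Finset.range (Q j)).image (fun k => k * N + j)) := by
    intro j hj j' hj' hjj'
    refine Finset.disjoint_left.2 fun l hl hl' => ?_
    simp only [Finset.mem_image, Finset.mem_range] at hl hl'
    obtain ⟨k, hk, rfl⟩ := hl
    obtain ⟨k', hk', hkl⟩ := hl'
    simp only [Finset.coe_range, Set.mem_Iio] at hj hj'
    have h1 : (k * N + j) % N = j := by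
      rw [Nat.add_comm, Nat.add_mul_mod_self_right]; exact Nat.mod_eq_of_lt hj
    have h2 : (k' * N + j') % N = j' := by
      rw [Nat.add_comm, Nat.add_mul_mod_self_right]; exact Nat.mod_eq_of_lt hj'
    rw [hkl] at h2
    exact hjj' (h1.symm.trans h2)
  have hsumS : ∑ j ∈ Finset.range N, ∑ k ∈ Finset.range (Q j), a N (f^[k * N + j] x) =
      ∑ l ∈ S, a N (f^[l] x) := by
    rw [hS, Finset.sum_biUnion hdisj]
    refine Finset.sum_congr rfl fun j _ => ?_
    rw [Finset.sum_image]
    intro k _ k' _ hkk'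
    have : k * N = k' * N := by simp only at hkk'; omega
    exact Nat.eq_of_mul_eq_mul_right (by omega) this
  have hsubset : S ⊆ Finset.range n := by
    intro l hl
    simp only [hS, Finset.mem_biUnion, Finset.mem_image, Finset.mem_range] at hl
    obtain ⟨j, hj, k, hk, rfl⟩ := hl
    rw [Finset.mem_range]
    have h1 : (k + 1) * N ≤ Q j * N := Nat.mul_le_mul_right N hk
    have h2 : Q j * N + R j = n - j := hmod j hj
    have h3 := hR1 j
    have h4 : (k + 1) * N = k * N + N := by ring
    omega
  have stepB : ∑ l ∈ S, a N (f^[l] x) ≤ ∑ l ∈ Finset.range n, a N (f^[l] x) :=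
    Finset.sum_le_sum_of_subset_of_nonneg hsubset fun l _ _ => hg0 l
  -- combine
  have hcomb : (N : ℝ) * a n x = ∑ _j ∈ Finset.range N, a n x := by
    rw [Finset.sum_const, Finset.card_range, nsmul_eq_mul]
  rw [hcomb]
  calc ∑ _j ∈ Finset.range N, a n x
      ≤ ∑ j ∈ Finset.range N,
          ((∑ k ∈ Finset.range (Q j), a N (f^[k * N + j] x)) + 2 * (N * C₀)) :=
        Finset.sum_le_sum fun j hj => stepA j (Finset.mem_range.1 hj)
    _ = (∑ j ∈ Finset.range N, ∑ k ∈ Finset.range (Q j), a N (f^[k * N + j] x))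
          + N * (2 * (N * C₀)) := by
        rw [Finset.sum_add_distrib, Finset.sum_const, Finset.card_range, nsmul_eq_mul]
    _ ≤ (∑ l ∈ Finset.range n, a N (f^[l] x)) + 2 * N * N * C₀ := by
        rw [hsumS]
        have := stepB
        have : (N:ℝ) * (2 * (N * C₀)) = 2 * N * N * C₀ := by ring
        linarith [stepB]

/-- Let `X` be a compact metric space, `f` a Borel measurable map, and `μ`
an `f`-invariant Borel probability measure satisfying exponential large deviations for
Lipschitz observables. If `a` is a subadditive cocycle over `f` which is nonnegative,
bounded by `n * C₀`, and upper semicontinuous at each time `n`, and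
`λ = inf_{n ≥ 1} (1/n) ∫ a n dμ`, then for every `ε > 0` there are `C, c > 0` with
`μ { x : a n x ≥ n (λ + ε) } ≤ C exp (-c n)` for all `n ≥ 1`. -/
theorem subadditive_cocycle_exponential_large_deviations
    {X : Type*} [MetricSpace X] [CompactSpace X] [MeasurableSpace X] [BorelSpace X]
    (f : X → X) (μ : Measure X) [IsProbabilityMeasure μ]
    (hf : MeasurePreserving f μ μ)
    (hLD : ∀ F : X → ℝ, (∃ K : NNReal, LipschitzWith K F) → ∀ ε : ℝ, 0 < ε →
      ∃ C > (0 : ℝ), ∃ c > (0 : ℝ), ∀ n : ℕ, 1 ≤ n →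
        μ {x | (n : ℝ) * ((∫ y, F y ∂μ) + ε) ≤ ∑ l ∈ Finset.range n, F (f^[l] x)} ≤
          ENNReal.ofReal (C * Real.exp (-c * n)))
    (a : ℕ → X → ℝ)
    (hsub : ∀ n s : ℕ, 1 ≤ n → 1 ≤ s → ∀ x, a (n + s) x ≤ a n (f^[s] x) + a s x)
    (C₀ : ℝ) (hC₀ : 0 ≤ C₀)
    (hbd : ∀ n : ℕ, 1 ≤ n → ∀ x, 0 ≤ a n x ∧ a n x ≤ n * C₀)
    (husc : ∀ n : ℕ, 1 ≤ n → UpperSemicontinuous (a n))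
    (lam : ℝ)
    (hlam : lam = sInf {r : ℝ | ∃ n : ℕ, 1 ≤ n ∧ r = (1 / (n : ℝ)) * ∫ x, a n x ∂μ}) :
    ∀ ε : ℝ, 0 < ε → ∃ C > (0 : ℝ), ∃ c > (0 : ℝ), ∀ n : ℕ, 1 ≤ n →
      μ {x | (n : ℝ) * (lam + ε) ≤ a n x} ≤ ENNReal.ofReal (C * Real.exp (-c * n)) := by
  intro ε hε
  have hXne : Nonempty X := by
    rcases isEmpty_or_nonempty X with h | h
    · exfalso
      have h1 : μ Set.univ = 1 := measure_univ
      rw [Set.univ_eq_empty_iff.2 h] at h1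
      simp at h1
    · exact h
  -- choose N with (1/N) ∫ a N < lam + ε/4
  set Sc : Set ℝ := {r : ℝ | ∃ n : ℕ, 1 ≤ n ∧ r = (1 / (n : ℝ)) * ∫ x, a n x ∂μ} with hSc
  have hScne : Sc.Nonempty := ⟨(1 / ((1:ℕ) : ℝ)) * ∫ x, a 1 x ∂μ, 1, le_refl 1, rfl⟩
  obtain ⟨r, hrS, hrlt⟩ : ∃ r ∈ Sc, r < lam + ε / 4 := by
    refine exists_lt_of_csInf_lt hScne ?_
    rw [← hlam]
    linarith
  obtain ⟨N, hN1, hrN⟩ := hrS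
  have hNpos : (0:ℝ) < N := by exact_mod_cast hN1
  have hIaN : ∫ x, a N x ∂μ < (N : ℝ) * (lam + ε / 4) := by
    rw [hrN] at hrlt
    have h1 : (1 / (N:ℝ)) * ∫ x, a N x ∂μ = (∫ x, a N x ∂μ) / N := by ring
    rw [h1, div_lt_iff₀ hNpos] at hrlt
    linarith [hrlt]
  -- Lipschitz approximation of a N
  obtain ⟨F, hFlip, haF, hFint⟩ := aux_usc_approx μ (a N) (husc N hN1) ((N : ℝ) * C₀)
    (fun x => (hbd N hN1 x).1) (fun x => (hbd N hN1 x).2)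
    (δ := (N : ℝ) * ε / 4) (by positivity)
  have hFbound : (∫ x, F x ∂μ) + (N : ℝ) * ε / 4 ≤ (N:ℝ) * lam + 3 * ((N:ℝ) * ε / 4) := by
    nlinarith
  -- large deviations for F
  obtain ⟨C, hC, c, hc, hLDb⟩ := hLD F hFlip ((N : ℝ) * ε / 4) (by positivity)
  set n₁ : ℕ := max N ⌈8 * (N : ℝ) * C₀ / ε⌉₊ + 1 with hn₁
  refine ⟨max C (Real.exp (c * n₁)), lt_of_lt_of_le hC (le_max_left _ _), c, hc, ?_⟩
  intro n hn
  by_cases hcase : n₁ ≤ n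
  · -- large n: use the inclusion and LD bound
    have hNn : N ≤ n := by omega
    have hnc : 8 * (N : ℝ) * C₀ / ε ≤ n := by
      have h1 : (8 * (N : ℝ) * C₀ / ε) ≤ (⌈8 * (N : ℝ) * C₀ / ε⌉₊ : ℝ) := Nat.le_ceil _
      have h2 : (⌈8 * (N : ℝ) * C₀ / ε⌉₊ : ℝ) ≤ n := by
        have : ⌈8 * (N : ℝ) * C₀ / ε⌉₊ ≤ n := by omega
        exact_mod_cast this
      linarith
    have h8 : 2 * (N:ℝ) * N * C₀ ≤ (n:ℝ) * N * ε / 4 := by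
      have h1 : 8 * (N : ℝ) * C₀ ≤ n * ε := by
        rw [div_le_iff₀ hε] at hnc
        linarith
      nlinarith
    have hincl : {x | (n:ℝ) * (lam + ε) ≤ a n x} ⊆
        {x | (n : ℝ) * ((∫ y, F y ∂μ) + (N : ℝ) * ε / 4) ≤ ∑ l ∈ Finset.range n, F (f^[l] x)} := by
      intro x hx
      simp only [Set.mem_setOf_eq] at hx ⊢
      have hkey := aux_key f a N C₀ hN1 hC₀ hsub hbd n hNn x
      have hsumF : ∑ l ∈ Finset.range n, a N (f^[l] x) ≤ ∑ l ∈ Finset.range n, F (f^[l] x) :=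
        Finset.sum_le_sum fun l _ => haF _
      have hnn : (0:ℝ) ≤ n := Nat.cast_nonneg n
      have h2 : (n:ℝ) * ((∫ y, F y ∂μ) + (N : ℝ) * ε / 4) ≤
          (n:ℝ) * ((N:ℝ) * lam + 3 * ((N:ℝ) * ε / 4)) :=
        mul_le_mul_of_nonneg_left hFbound hnn
      have h3 : (N:ℝ) * ((n:ℝ) * (lam + ε)) ≤ (N:ℝ) * a n x :=
        mul_le_mul_of_nonneg_left hx (le_of_lt hNpos)
      nlinarith
    calc μ {x | (n:ℝ) * (lam + ε) ≤ a n x}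
        ≤ μ {x | (n : ℝ) * ((∫ y, F y ∂μ) + (N : ℝ) * ε / 4) ≤
            ∑ l ∈ Finset.range n, F (f^[l] x)} := measure_mono hincl
      _ ≤ ENNReal.ofReal (C * Real.exp (-c * n)) := hLDb n hn
      _ ≤ ENNReal.ofReal (max C (Real.exp (c * n₁)) * Real.exp (-c * n)) := by
          apply ENNReal.ofReal_le_ofReal
          exact mul_le_mul_of_nonneg_right (le_max_left _ _) (Real.exp_pos _).le
  · -- small n: trivial bound
    push_neg at hcase
    have h1 : μ {x | (n:ℝ) * (lam + ε) ≤ a n x} ≤ 1 := prob_le_one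
    have h2 : (1:ℝ) ≤ max C (Real.exp (c * n₁)) * Real.exp (-c * n) := by
      have h3 : Real.exp (c * n₁) * Real.exp (-c * n) = Real.exp (c * n₁ + (-c * n)) :=
        (Real.exp_add _ _).symm
      have h4 : (0:ℝ) ≤ c * n₁ + (-c * n) := by
        have h5 : (n:ℝ) ≤ n₁ := by exact_mod_cast hcase.le
        nlinarith
      have h6 : (1:ℝ) ≤ Real.exp (c * n₁) * Real.exp (-c * n) := by
        rw [h3]; exact Real.one_le_exp h4
      have h7 : Real.exp (c * n₁) * Real.exp (-c * n) ≤
          max C (Real.exp (c * n₁)) * Real.exp (-c * n) :=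
        mul_le_mul_of_nonneg_right (le_max_right _ _) (Real.exp_pos _).le
      linarith
    calc μ {x | (n:ℝ) * (lam + ε) ≤ a n x} ≤ 1 := h1
      _ = ENNReal.ofReal 1 := ENNReal.ofReal_one.symm
      _ ≤ ENNReal.ofReal (max C (Real.exp (c * n₁)) * Real.exp (-c * n)) :=
          ENNReal.ofReal_le_ofReal h2
end

section
/- Let X be a compact metric space, f : X → X a continuous map, and μ an f-invariant Borel probability measure on X satisfying exponential large deviations for Lipschitz observables. Let d ≥ 1 and let A : X → (ℝ^d →L[ℝ] ℝ^d) be continuous with A x invertible for every x ∈ X and with x ↦ (A x)⁻¹ continuous. Let E assign to each x ∈ X a nonzero linear subspace E x of ℝ^d such that (A x) maps E x into E (f x) for every x, and assume the family E is sequentially upper semicontinuous on X. Define γ n x = Real.log (sup { ‖(A^n x) u‖ : u ∈ E x, ‖u‖ = 1 }) and λ = inf over integers n ≥ 1 of (1/n) ∫ γ n dμ. Then for every ε > 0 there exist constants C > 0 and c > 0 such that μ { x ∈ X : γ n x ≥ n · (λ + ε) } ≤ C · Real.exp (−c · n) for all integers n ≥ 1. -/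
open MeasureTheory

/-- The iterates of a linear cocycle `A` over a map `f`:
`A^0 x = id` and `A^{n+1} x = A^n (f x) ∘ A x`, so that
`A^n x = A (f^[n-1] x) ∘ ⋯ ∘ A (f x) ∘ A x`. -/
noncomputable def cocycleIter {X : Type*} {d : ℕ} (f : X → X)
    (A : X → (EuclideanSpace ℝ (Fin d) →L[ℝ] EuclideanSpace ℝ (Fin d))) :
    ℕ → X → (EuclideanSpace ℝ (Fin d) →L[ℝ] EuclideanSpace ℝ (Fin d))
  | 0, _ => ContinuousLinearMap.id ℝ _
  | n + 1, x => cocycleIter f A n (f x) ∘L A x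

section aux
variable {X : Type*} {d : ℕ} (f : X → X)
  (A : X → (EuclideanSpace ℝ (Fin d) →L[ℝ] EuclideanSpace ℝ (Fin d)))

lemma cocycleIter_add (m n : ℕ) (x : X) :
    cocycleIter f A (m + n) x =
      (cocycleIter f A n (f^[m] x)) ∘L cocycleIter f A m x := by
  induction m generalizing n x with
  | zero => simp [cocycleIter]
  | succ m ih =>
      have h1 : m + 1 + n = (m + n) + 1 := by omega
      rw [h1]
      show cocycleIter f A (m + n) (f x) ∘L A x = _
      rw [ih n (f x)]
      rw [ContinuousLinearMap.comp_assoc]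
      rfl

lemma cocycleIter_mem {E : X → Submodule ℝ (EuclideanSpace ℝ (Fin d))}
    (hEinvariant : ∀ x : X, ∀ u ∈ E x, A x u ∈ E (f x))
    (n : ℕ) (x : X) (u : EuclideanSpace ℝ (Fin d)) (hu : u ∈ E x) :
    cocycleIter f A n x u ∈ E (f^[n] x) := by
  induction n generalizing x u with
  | zero => exact hu
  | succ n ih =>
      have : cocycleIter f A (n+1) x u = cocycleIter f A n (f x) (A x u) := rfl
      rw [this, Function.iterate_succ_apply]
      exact ih (f x) (A x u) (hEinvariant x u hu)

lemma cocycleIter_norm_le {K : ℝ} (hK0 : 0 ≤ K) (hK : ∀ y, ‖A y‖ ≤ K)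
    (n : ℕ) (x : X) (u : EuclideanSpace ℝ (Fin d)) :
    ‖cocycleIter f A n x u‖ ≤ K ^ n * ‖u‖ := by
  induction n generalizing x u with
  | zero => simp [cocycleIter]
  | succ n ih =>
      have h1 : cocycleIter f A (n+1) x u = cocycleIter f A n (f x) (A x u) := rfl
      rw [h1]
      calc ‖cocycleIter f A n (f x) (A x u)‖ ≤ K ^ n * ‖A x u‖ := ih (f x) (A x u)
        _ ≤ K ^ n * (K * ‖u‖) := by
            refine mul_le_mul_of_nonneg_left ?_ (pow_nonneg hK0 n)
            exact le_trans ((A x).le_opNorm u)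
              (mul_le_mul_of_nonneg_right (hK x) (norm_nonneg u))
        _ = K ^ (n+1) * ‖u‖ := by ring

lemma cocycleIter_norm_ge {Ainv : X → (EuclideanSpace ℝ (Fin d) →L[ℝ] EuclideanSpace ℝ (Fin d))}
    (hAinv : ∀ x : X, (Ainv x) ∘L (A x) = ContinuousLinearMap.id ℝ (EuclideanSpace ℝ (Fin d)))
    {K : ℝ} (hK0 : 0 ≤ K) (hK : ∀ y, ‖Ainv y‖ ≤ K)
    (n : ℕ) (x : X) (u : EuclideanSpace ℝ (Fin d)) :
    ‖u‖ ≤ K ^ n * ‖cocycleIter f A n x u‖ := by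
  induction n generalizing x u with
  | zero => simp [cocycleIter]
  | succ n ih =>
      have h1 : cocycleIter f A (n+1) x u = cocycleIter f A n (f x) (A x u) := rfl
      have h2 : u = (Ainv x) (A x u) := by
        have h3 : ((Ainv x) ∘L (A x)) u = u := by rw [hAinv x]; rfl
        simpa using h3.symm
      calc ‖u‖ = ‖(Ainv x) (A x u)‖ := by rw [← h2]
        _ ≤ K * ‖A x u‖ := le_trans ((Ainv x).le_opNorm _)
            (mul_le_mul_of_nonneg_right (hK x) (norm_nonneg _))
        _ ≤ K * (K ^ n * ‖cocycleIter f A n (f x) (A x u)‖) :=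
            mul_le_mul_of_nonneg_left (ih (f x) (A x u)) hK0
        _ = K ^ (n+1) * ‖cocycleIter f A (n+1) x u‖ := by rw [h1]; ring

lemma cocycleIter_continuous [TopologicalSpace X] (hfc : Continuous f) (hAc : Continuous A)
    (n : ℕ) : Continuous (fun x => cocycleIter f A n x) := by
  induction n with
  | zero => exact continuous_const
  | succ n ih =>
      have : (fun x => cocycleIter f A (n+1) x)
          = fun x => (cocycleIter f A n (f x)) ∘L A x := rfl
      rw [this]
      exact (ih.comp hfc).clm_comp hAc

lemma aux_sum_reindex (h : ℕ → ℝ) (k q : ℕ) :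
    ∑ i ∈ Finset.range k, ∑ j ∈ Finset.range q, h (i + j * k)
      = ∑ l ∈ Finset.range (q * k), h l := by
  induction q with
  | zero => simp
  | succ q ih =>
      have h1 : (q + 1) * k = q * k + k := by ring
      rw [h1, Finset.sum_range_add]
      rw [← ih]
      rw [← Finset.sum_add_distrib]
      refine Finset.sum_congr rfl fun i _ => ?_
      rw [Finset.sum_range_succ, add_comm i (q * k)]

end aux

set_option maxHeartbeats 1000000

/-- Let `X` be a compact metric space, `f : X → X` continuous, and `μ` an
`f`-invariant Borel probability measure satisfying exponential large deviations for
Lipschitz observables. Let `A` be a continuous cocycle of invertible linear maps on `ℝ^d`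
with continuous inverse `Ainv`, leaving invariant a sequentially upper semicontinuous
family `E` of nonzero subspaces. With `γ n x = log (sup { ‖(A^n x) u‖ : u ∈ E x, ‖u‖ = 1 })`
and `λ = inf_{n ≥ 1} (1/n) ∫ γ n dμ`, for every `ε > 0` there exist `C, c > 0` with
`μ { x : γ n x ≥ n (λ + ε) } ≤ C exp (-c n)` for all `n ≥ 1`. -/
theorem oseledets_restricted_norm_exponential_large_deviations
    {X : Type*} [MetricSpace X] [CompactSpace X] [MeasurableSpace X] [BorelSpace X]
    (f : X → X) (hfc : Continuous f)
    (μ : Measure X) [IsProbabilityMeasure μ] (hf : MeasurePreserving f μ μ)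
    (hLD : ∀ F : X → ℝ, (∃ K : NNReal, LipschitzWith K F) → ∀ ε : ℝ, 0 < ε →
      ∃ C > (0 : ℝ), ∃ c > (0 : ℝ), ∀ n : ℕ, 1 ≤ n →
        μ {x | (n : ℝ) * ((∫ y, F y ∂μ) + ε) ≤ ∑ l ∈ Finset.range n, F (f^[l] x)} ≤
          ENNReal.ofReal (C * Real.exp (-c * n)))
    (d : ℕ) (hd : 1 ≤ d)
    (A Ainv : X → (EuclideanSpace ℝ (Fin d) →L[ℝ] EuclideanSpace ℝ (Fin d)))
    (hAc : Continuous A) (hAinvc : Continuous Ainv)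
    (hAinv : ∀ x : X,
      (A x) ∘L (Ainv x) = ContinuousLinearMap.id ℝ (EuclideanSpace ℝ (Fin d)) ∧
      (Ainv x) ∘L (A x) = ContinuousLinearMap.id ℝ (EuclideanSpace ℝ (Fin d)))
    (E : X → Submodule ℝ (EuclideanSpace ℝ (Fin d)))
    (hEne : ∀ x, E x ≠ ⊥)
    (hEinvariant : ∀ x : X, ∀ u ∈ E x, A x u ∈ E (f x))
    (hEusc : ∀ x : X, ∀ xs : ℕ → X,
      Filter.Tendsto xs Filter.atTop (nhds x) →
      ∀ us : ℕ → EuclideanSpace ℝ (Fin d),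
        (∀ m, us m ∈ E (xs m)) → (∀ m, ‖us m‖ = 1) →
        ∀ u : EuclideanSpace ℝ (Fin d),
          Filter.Tendsto us Filter.atTop (nhds u) → u ∈ E x)
    (γ : ℕ → X → ℝ)
    (hγ : ∀ n x, γ n x =
      Real.log (sSup {r : ℝ | ∃ u ∈ E x, ‖u‖ = 1 ∧ r = ‖cocycleIter f A n x u‖}))
    (lam : ℝ)
    (hlam : lam = sInf {r : ℝ | ∃ n : ℕ, 1 ≤ n ∧ r = (1 / (n : ℝ)) * ∫ x, γ n x ∂μ}) :
    ∀ ε : ℝ, 0 < ε → ∃ C > (0 : ℝ), ∃ c > (0 : ℝ), ∀ n : ℕ, 1 ≤ n →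
      μ {x | (n : ℝ) * (lam + ε) ≤ γ n x} ≤ ENNReal.ofReal (C * Real.exp (-c * n)) := by
  classical
  intro ε hε
  -- X is nonempty
  have hXne : Nonempty X := by
    by_contra h
    have h1 : (μ Set.univ) = 1 := measure_univ
    rw [Set.univ_eq_empty_iff.mpr (not_nonempty_iff.mp h), measure_empty] at h1
    simp at h1
  -- uniform bound K
  obtain ⟨K, hK1, hKA, hKI⟩ : ∃ K : ℝ, 1 ≤ K ∧ (∀ y, ‖A y‖ ≤ K) ∧ (∀ y, ‖Ainv y‖ ≤ K) := by
    obtain ⟨y0, -, hy0⟩ := IsCompact.exists_isMaxOn isCompact_univ Set.univ_nonempty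
      ((hAc.norm.max hAinvc.norm).continuousOn :
        ContinuousOn (fun y => max ‖A y‖ ‖Ainv y‖) Set.univ)
    refine ⟨max (max ‖A y0‖ ‖Ainv y0‖) 1, le_max_right _ _, fun y => ?_, fun y => ?_⟩
    · exact le_trans (le_trans (le_max_left _ _) (hy0 (Set.mem_univ y))) (le_max_left _ _)
    · exact le_trans (le_trans (le_max_right _ _) (hy0 (Set.mem_univ y))) (le_max_left _ _)
  have hK0 : (0:ℝ) ≤ K := le_trans zero_le_one hK1
  have hKpow : ∀ n : ℕ, (0:ℝ) < K ^ n := fun n => pow_pos (lt_of_lt_of_le one_pos hK1) n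
  set S : ℕ → X → Set ℝ :=
    fun n x => {r : ℝ | ∃ u ∈ E x, ‖u‖ = 1 ∧ r = ‖cocycleIter f A n x u‖} with hSdef
  set g : ℕ → X → ℝ := fun n x => sSup (S n x) with hgdef
  have hγ' : ∀ n x, γ n x = Real.log (g n x) := hγ
  -- unit vectors exist
  have hunit : ∀ x : X, ∃ u : EuclideanSpace ℝ (Fin d), u ∈ E x ∧ ‖u‖ = 1 := by
    intro x
    obtain ⟨v, hv, hvne⟩ := (Submodule.ne_bot_iff (E x)).mp (hEne x)
    refine ⟨‖v‖⁻¹ • v, Submodule.smul_mem _ _ hv, ?_⟩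
    rw [norm_smul, norm_inv, norm_norm]
    exact inv_mul_cancel₀ (norm_ne_zero_iff.mpr hvne)
  have hSne : ∀ n x, (S n x).Nonempty := by
    intro n x
    obtain ⟨u, hu, hun⟩ := hunit x
    exact ⟨_, u, hu, hun, rfl⟩
  have hSub : ∀ n x, ∀ r ∈ S n x, r ≤ K ^ n := by
    rintro n x r ⟨u, hu, hun, rfl⟩
    calc ‖cocycleIter f A n x u‖ ≤ K ^ n * ‖u‖ := cocycleIter_norm_le f A hK0 hKA n x u
      _ = K ^ n := by rw [hun, mul_one]
  have hSbdd : ∀ n x, BddAbove (S n x) := fun n x => ⟨K ^ n, fun r hr => hSub n x r hr⟩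
  have hSlb : ∀ n x, ∀ r ∈ S n x, (K ^ n)⁻¹ ≤ r := by
    rintro n x r ⟨u, hu, hun, rfl⟩
    have h1 : ‖u‖ ≤ K ^ n * ‖cocycleIter f A n x u‖ :=
      cocycleIter_norm_ge f A (fun y => (hAinv y).2) hK0 hKI n x u
    rw [hun] at h1
    rw [inv_le_iff_one_le_mul₀ (hKpow n)]
    linarith
  have hgub : ∀ n x, g n x ≤ K ^ n := fun n x => csSup_le (hSne n x) (hSub n x)
  have hglb : ∀ n x, (K ^ n)⁻¹ ≤ g n x := by
    intro n x
    obtain ⟨r, hr⟩ := hSne n x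
    exact le_trans (hSlb n x r hr) (le_csSup (hSbdd n x) hr)
  have hgpos : ∀ n x, 0 < g n x := fun n x =>
    lt_of_lt_of_le (inv_pos.mpr (hKpow n)) (hglb n x)
  set L : ℝ := Real.log K with hLdef
  have hL0 : 0 ≤ L := Real.log_nonneg hK1
  have hγub : ∀ n x, γ n x ≤ n * L := by
    intro n x
    rw [hγ' n x]
    calc Real.log (g n x) ≤ Real.log (K ^ n) :=
          Real.log_le_log (hgpos n x) (hgub n x)
      _ = n * L := by rw [Real.log_pow]
  have hγlb : ∀ n x, -(n * L) ≤ γ n x := by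
    intro n x
    rw [hγ' n x]
    calc -((n:ℝ) * L) = Real.log ((K ^ n)⁻¹) := by rw [Real.log_inv, Real.log_pow]
      _ ≤ Real.log (g n x) := Real.log_le_log (inv_pos.mpr (hKpow n)) (hglb n x)
  -- subadditivity
  have hsub : ∀ m n x, γ (m + n) x ≤ γ m x + γ n (f^[m] x) := by
    intro m n x
    have hg : g (m + n) x ≤ g m x * g n (f^[m] x) := by
      refine csSup_le (hSne _ x) ?_
      rintro r ⟨u, hu, hun, rfl⟩
      set v : EuclideanSpace ℝ (Fin d) := cocycleIter f A m x u with hvdef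
      have hvE : v ∈ E (f^[m] x) := cocycleIter_mem f A hEinvariant m x u hu
      have hvnorm : ‖v‖ ∈ S m x := ⟨u, hu, hun, rfl⟩
      have hvpos : 0 < ‖v‖ := lt_of_lt_of_le (inv_pos.mpr (hKpow m)) (hSlb m x _ hvnorm)
      have hvne : ‖v‖ ≠ 0 := ne_of_gt hvpos
      have hcomp : cocycleIter f A (m + n) x u = cocycleIter f A n (f^[m] x) v := by
        rw [cocycleIter_add f A m n x]; rfl
      set w : EuclideanSpace ℝ (Fin d) := ‖v‖⁻¹ • v with hwdef
      have hwE : w ∈ E (f^[m] x) := Submodule.smul_mem _ _ hvE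
      have hwn : ‖w‖ = 1 := by
        rw [hwdef, norm_smul, norm_inv, norm_norm]; exact inv_mul_cancel₀ hvne
      have hsplit : ‖cocycleIter f A n (f^[m] x) v‖
          = ‖v‖ * ‖cocycleIter f A n (f^[m] x) w‖ := by
        have h1 : cocycleIter f A n (f^[m] x) w
            = ‖v‖⁻¹ • cocycleIter f A n (f^[m] x) v := by
          rw [hwdef]
          exact ContinuousLinearMap.map_smul _ _ _
        rw [h1, norm_smul, norm_inv, norm_norm, ← mul_assoc,
          mul_inv_cancel₀ hvne, one_mul]
      rw [hcomp, hsplit]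
      have h2 : ‖v‖ ≤ g m x := le_csSup (hSbdd m x) hvnorm
      have h3 : ‖cocycleIter f A n (f^[m] x) w‖ ≤ g n (f^[m] x) :=
        le_csSup (hSbdd n _) ⟨w, hwE, hwn, rfl⟩
      exact mul_le_mul h2 h3 (norm_nonneg _) (le_trans hvpos.le h2)
    rw [hγ' (m+n) x, hγ' m x, hγ' n (f^[m] x)]
    calc Real.log (g (m+n) x) ≤ Real.log (g m x * g n (f^[m] x)) :=
        Real.log_le_log (hgpos _ x) hg
      _ = Real.log (g m x) + Real.log (g n (f^[m] x)) :=
        Real.log_mul (ne_of_gt (hgpos m x)) (ne_of_gt (hgpos n _))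
  -- continuity of the cocycle evaluation
  have hBcont : ∀ n : ℕ, Continuous (fun p : X × EuclideanSpace ℝ (Fin d) => (cocycleIter f A n p.1) p.2) :=
    fun n => ((cocycleIter_continuous f A hfc hAc n).comp continuous_fst).clm_apply
      continuous_snd
  -- attainment of the supremum
  have hattain : ∀ n x, ∃ u : EuclideanSpace ℝ (Fin d), u ∈ E x ∧ ‖u‖ = 1 ∧ g n x = ‖cocycleIter f A n x u‖ := by
    intro n x
    set Cs : Set (EuclideanSpace ℝ (Fin d)) := (E x : Set (EuclideanSpace ℝ (Fin d))) ∩ Metric.sphere 0 1 with hCsdef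
    have hCc : IsCompact Cs :=
      (isCompact_sphere (0: EuclideanSpace ℝ (Fin d)) 1).inter_left (E x).closed_of_finiteDimensional
    have hCne : Cs.Nonempty := by
      obtain ⟨u, hu, hun⟩ := hunit x
      exact ⟨u, hu, mem_sphere_zero_iff_norm.mpr hun⟩
    obtain ⟨u, huC, hmax⟩ := hCc.exists_isMaxOn hCne
      ((cocycleIter f A n x).continuous.norm.continuousOn)
    refine ⟨u, huC.1, mem_sphere_zero_iff_norm.mp huC.2, ?_⟩
    refine le_antisymm ?_ (le_csSup (hSbdd n x) ⟨u, huC.1, mem_sphere_zero_iff_norm.mp huC.2, rfl⟩)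
    refine csSup_le (hSne n x) ?_
    rintro r ⟨w, hw, hwn, rfl⟩
    exact hmax ⟨hw, mem_sphere_zero_iff_norm.mpr hwn⟩
  -- upper semicontinuity of γ n
  have husc : ∀ (n : ℕ) (x : X) (e : ℝ), 0 < e →
      ∃ δ > (0:ℝ), ∀ y, dist y x < δ → γ n y < γ n x + e := by
    intro n x e he
    by_contra hcon
    push_neg at hcon
    have hseq : ∀ m : ℕ, ∃ y, dist y x < 1/((m:ℝ)+1) ∧ γ n x + e ≤ γ n y := by
      intro m
      obtain ⟨y, hy1, hy2⟩ := hcon (1/((m:ℝ)+1)) (by positivity)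
      exact ⟨y, hy1, hy2⟩
    choose xs hxs1 hxs2 using hseq
    have hxs : Filter.Tendsto xs Filter.atTop (nhds x) := by
      rw [tendsto_iff_dist_tendsto_zero]
      exact squeeze_zero (fun m => dist_nonneg) (fun m => (hxs1 m).le)
        tendsto_one_div_add_atTop_nhds_zero_nat
    choose us hus1 hus2 hus3 using fun m => hattain n (xs m)
    obtain ⟨u, husph, φ, hφ, huconv⟩ := (isCompact_sphere (0: EuclideanSpace ℝ (Fin d)) 1).tendsto_subseq
      (fun m => mem_sphere_zero_iff_norm.mpr (hus2 m))
    have huE : u ∈ E x := hEusc x (xs ∘ φ) (hxs.comp hφ.tendsto_atTop) (us ∘ φ)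
      (fun m => hus1 (φ m)) (fun m => hus2 (φ m)) u huconv
    have hnorm1 : ‖u‖ = 1 := mem_sphere_zero_iff_norm.mp husph
    have htt : Filter.Tendsto (fun m => ‖cocycleIter f A n (xs (φ m)) (us (φ m))‖)
        Filter.atTop (nhds ‖cocycleIter f A n x u‖) := by
      have h1 : Filter.Tendsto (fun m => ((xs (φ m)), (us (φ m)))) Filter.atTop
          (nhds (x, u)) := (hxs.comp hφ.tendsto_atTop).prodMk_nhds huconv
      have h2 : Continuous (fun p : X × EuclideanSpace ℝ (Fin d) =>
          ‖(cocycleIter f A n p.1) p.2‖) := (hBcont n).norm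
      have h3 := (h2.tendsto (x, u)).comp h1
      exact h3
    have hge : Real.exp (γ n x + e) ≤ ‖cocycleIter f A n x u‖ := by
      refine ge_of_tendsto htt (Filter.Eventually.of_forall fun m => ?_)
      have h5 : Real.exp (γ n x + e) ≤ Real.exp (γ n (xs (φ m))) :=
        Real.exp_le_exp.mpr (hxs2 (φ m))
      have h6 : Real.exp (γ n (xs (φ m))) = g n (xs (φ m)) := by
        rw [hγ' n (xs (φ m))]; exact Real.exp_log (hgpos n (xs (φ m)))
      rw [h6, hus3 (φ m)] at h5
      exact h5
    have hle : ‖cocycleIter f A n x u‖ ≤ g n x :=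
      le_csSup (hSbdd n x) ⟨u, huE, hnorm1, rfl⟩
    have h7 : g n x = Real.exp (γ n x) := by
      rw [hγ' n x, Real.exp_log (hgpos n x)]
    have h8 : Real.exp (γ n x + e) ≤ Real.exp (γ n x) := by
      rw [← h7]; exact le_trans hge hle
    have h9 := Real.exp_le_exp.mp h8
    linarith
  -- choose k with small integral average
  have hk_exists : ∃ k : ℕ, 1 ≤ k ∧ (∫ x, γ k x ∂μ) < (k:ℝ) * (lam + ε/4) := by
    have hset_ne : {r : ℝ | ∃ n : ℕ, 1 ≤ n ∧ r = (1 / (n : ℝ)) * ∫ x, γ n x ∂μ}.Nonempty :=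
      ⟨(1 / ((1:ℕ) : ℝ)) * ∫ x, γ 1 x ∂μ, 1, le_refl 1, rfl⟩
    have hlamlt : sInf {r : ℝ | ∃ n : ℕ, 1 ≤ n ∧ r = (1 / (n : ℝ)) * ∫ x, γ n x ∂μ}
        < lam + ε/4 := by rw [← hlam]; linarith
    obtain ⟨r, ⟨k, hk1, hrk⟩, hrlt⟩ := exists_lt_of_csInf_lt hset_ne hlamlt
    have hkpos : (0:ℝ) < (k:ℝ) := by exact_mod_cast hk1
    refine ⟨k, hk1, ?_⟩
    rw [hrk] at hrlt
    have h2 := mul_lt_mul_of_pos_left hrlt hkpos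
    calc (∫ x, γ k x ∂μ) = (k:ℝ) * ((1 / (k:ℝ)) * ∫ x, γ k x ∂μ) := by
          field_simp
      _ < (k:ℝ) * (lam + ε/4) := h2
  obtain ⟨k, hk1, hint⟩ := hk_exists
  have hkpos : (0:ℝ) < (k:ℝ) := by exact_mod_cast hk1
  -- Lipschitz upper approximations of γ k (sup-convolution)
  set B0 : ℝ := (k:ℝ) * L with hB0def
  have hB0 : 0 ≤ B0 := by positivity
  have hγkb : ∀ x, |γ k x| ≤ B0 := by
    intro x
    rw [abs_le]
    exact ⟨hγlb k x, hγub k x⟩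
  set T : ℕ → X → Set ℝ := fun m x => {r : ℝ | ∃ y : X, r = γ k y - (m:ℝ) * dist x y}
    with hTdef
  set Fm : ℕ → X → ℝ := fun m x => sSup (T m x) with hFmdef
  have hTne : ∀ m x, (T m x).Nonempty := fun m x => ⟨γ k x, x, by simp⟩
  have hTub : ∀ m x, ∀ r ∈ T m x, r ≤ B0 := by
    rintro m x r ⟨y, rfl⟩
    have h1 : γ k y ≤ B0 := (abs_le.mp (hγkb y)).2
    have h2 : 0 ≤ (m:ℝ) * dist x y := by positivity
    linarith
  have hTbdd : ∀ m x, BddAbove (T m x) := fun m x => ⟨B0, fun r hr => hTub m x r hr⟩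
  have hFub : ∀ m x, Fm m x ≤ B0 := fun m x => csSup_le (hTne m x) (hTub m x)
  have hFge : ∀ m x, γ k x ≤ Fm m x := fun m x =>
    le_csSup (hTbdd m x) ⟨x, by simp⟩
  have hFlb : ∀ m x, -B0 ≤ Fm m x := fun m x =>
    le_trans ((abs_le.mp (hγkb x)).1) (hFge m x)
  have hFled : ∀ m (x y : X), Fm m x ≤ Fm m y + (m:ℝ) * dist x y := by
    intro m x y
    refine csSup_le (hTne m x) ?_
    rintro r ⟨z, rfl⟩
    have h1 : γ k z - (m:ℝ) * dist y z ≤ Fm m y := le_csSup (hTbdd m y) ⟨z, rfl⟩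
    have h2 : dist y z ≤ dist y x + dist x z := dist_triangle y x z
    have h3 : (0:ℝ) ≤ (m:ℝ) := by positivity
    have h4 : (m:ℝ) * dist y z ≤ (m:ℝ) * (dist y x + dist x z) :=
      mul_le_mul_of_nonneg_left h2 h3
    rw [dist_comm y x] at h4
    nlinarith [h4]
  have hFlip : ∀ m : ℕ, LipschitzWith (m : NNReal) (Fm m) := by
    intro m
    refine LipschitzWith.of_dist_le_mul ?_
    intro x y
    have h1 := hFled m x y
    have h2 := hFled m y x
    rw [dist_comm y x] at h2
    rw [Real.dist_eq, abs_le]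
    constructor
    · push_cast; linarith
    · push_cast; linarith
  have hFanti : ∀ (m m' : ℕ), m ≤ m' → ∀ x, Fm m' x ≤ Fm m x := by
    intro m m' hmm x
    refine csSup_le (hTne m' x) ?_
    rintro r ⟨y, rfl⟩
    have h1 : γ k y - (m:ℝ) * dist x y ≤ Fm m x := le_csSup (hTbdd m x) ⟨y, rfl⟩
    have h2 : (m:ℝ) * dist x y ≤ (m':ℝ) * dist x y :=
      mul_le_mul_of_nonneg_right (by exact_mod_cast hmm) dist_nonneg
    linarith
  have hFtend : ∀ x, Filter.Tendsto (fun m => Fm m x) Filter.atTop (nhds (γ k x)) := by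
    intro x
    rw [Metric.tendsto_atTop]
    intro e he
    obtain ⟨δ, hδ, hδ'⟩ := husc k x (e/2) (by linarith)
    refine ⟨Nat.ceil ((2 * B0 + 1) / δ), fun m hm => ?_⟩
    have hmδ : 2 * B0 + 1 ≤ (m:ℝ) * δ := by
      have h1 : ((2 * B0 + 1) / δ) ≤ (m:ℝ) := le_trans (Nat.le_ceil _) (by exact_mod_cast hm)
      rw [div_le_iff₀ hδ] at h1
      linarith
    have hup : Fm m x ≤ γ k x + e/2 := by
      refine csSup_le (hTne m x) ?_
      rintro r ⟨y, rfl⟩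
      by_cases hy : dist y x < δ
      · have h1 := hδ' y hy
        have h2 : (0:ℝ) ≤ (m:ℝ) * dist x y := by positivity
        linarith
      · push_neg at hy
        have h1 : (m:ℝ) * δ ≤ (m:ℝ) * dist x y := by
          rw [dist_comm x y]
          exact mul_le_mul_of_nonneg_left hy (by positivity)
        have h2 : γ k y ≤ B0 := (abs_le.mp (hγkb y)).2
        have h3 : -B0 ≤ γ k x := (abs_le.mp (hγkb x)).1
        linarith
    have hdown : γ k x ≤ Fm m x := hFge m x
    rw [Real.dist_eq, abs_of_nonneg (by linarith)]
    linarith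
  -- integrability and integral convergence
  have hFmmeas : ∀ m, AEStronglyMeasurable (Fm m) μ :=
    fun m => ((hFlip m).continuous).aestronglyMeasurable
  have hγkmeas : AEMeasurable (γ k) μ :=
    aemeasurable_of_tendsto_metrizable_ae' (fun m => ((hFlip m).continuous).measurable.aemeasurable)
      (Filter.Eventually.of_forall hFtend)
  have hFmbound : ∀ m, ∀ᵐ x ∂μ, ‖Fm m x‖ ≤ B0 := by
    intro m
    refine Filter.Eventually.of_forall fun x => ?_
    rw [Real.norm_eq_abs, abs_le]
    exact ⟨hFlb m x, hFub m x⟩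
  have htendI : Filter.Tendsto (fun m => ∫ x, Fm m x ∂μ) Filter.atTop
      (nhds (∫ x, γ k x ∂μ)) :=
    tendsto_integral_of_dominated_convergence (fun _ => B0) hFmmeas (integrable_const B0)
      hFmbound (Filter.Eventually.of_forall hFtend)
  obtain ⟨m₀, hm₀⟩ := (htendI.eventually_lt_const
    (by nlinarith [hkpos, hε] : (∫ x, γ k x ∂μ) < (∫ x, γ k x ∂μ) + (k:ℝ)*ε/4)).exists
  have hIlt : (∫ x, Fm m₀ x ∂μ) < (k:ℝ) * (lam + ε/2) := by
    calc (∫ x, Fm m₀ x ∂μ) < (∫ x, γ k x ∂μ) + (k:ℝ)*ε/4 := hm₀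
      _ < (k:ℝ) * (lam + ε/4) + (k:ℝ)*ε/4 := by linarith
      _ = (k:ℝ) * (lam + ε/2) := by ring
  -- large deviations for the Lipschitz approximation
  obtain ⟨C₀, hC₀, c₀, hc₀, hbound⟩ := hLD (Fm m₀) ⟨(m₀ : NNReal), hFlip m₀⟩
    ((k:ℝ) * ε / 4) (by positivity)
  -- iterated subadditivity
  have hiter : ∀ (q m : ℕ) (x : X),
      γ (m + q * k) x ≤ γ m x + ∑ j ∈ Finset.range q, γ k (f^[m + j * k] x) := by
    intro q
    induction q with
    | zero => intro m x; simp
    | succ q ih =>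
        intro m x
        have h1 : m + (q+1) * k = (m + q * k) + k := by ring
        rw [h1, Finset.sum_range_succ]
        calc γ ((m + q * k) + k) x ≤ γ (m + q * k) x + γ k (f^[m + q * k] x) := hsub _ _ x
          _ ≤ γ m x + (∑ j ∈ Finset.range q, γ k (f^[m + j * k] x)) + γ k (f^[m + q * k] x) := by
              linarith [ih m x]
          _ = _ := by ring
  -- key estimate: k * γ n x ≤ ∑_{l<n} γ k (f^l x) + 5 k^2 L for n ≥ 2k
  have hkey : ∀ n : ℕ, 2 * k ≤ n → ∀ x : X,
      (k:ℝ) * γ n x ≤ (∑ l ∈ Finset.range n, γ k (f^[l] x)) + 5 * (k:ℝ) * ((k:ℝ) * L) := by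
    intro n hn x
    have hk0 : 0 < k := hk1
    have hnd : 2 ≤ n / k := (Nat.le_div_iff_mul_le hk0).mpr (by omega)
    obtain ⟨q, hq⟩ : ∃ q, n / k = q + 1 := ⟨n / k - 1, by omega⟩
    have hmod : n % k < k := Nat.mod_lt _ hk0
    set s : ℕ := k + n % k with hsdef
    have hdecomp : n = q * k + s := by
      have h0 := Nat.div_add_mod n k
      rw [hq] at h0
      calc n = k * (q + 1) + n % k := h0.symm
        _ = q * k + (k + n % k) := by ring
    have hs2k : s ≤ 2 * k := by omega
    obtain ⟨a, ha⟩ : ∃ a, q * k = a := ⟨_, rfl⟩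
    rw [ha] at hdecomp
    -- per-phase estimate
    have hper : ∀ i ∈ Finset.range k,
        γ n x ≤ (∑ j ∈ Finset.range q, γ k (f^[i + j * k] x)) + 3 * ((k:ℝ) * L) := by
      intro i hi
      have hik : i < k := Finset.mem_range.mp hi
      set r : ℕ := s - i with hrdef
      have hir : n = (i + a) + r := by omega
      have h1 : γ n x ≤ γ (i + a) x + γ r (f^[i + a] x) := by
        rw [hir]; exact hsub (i + a) r x
      have h2 : γ (i + a) x ≤ γ i x + ∑ j ∈ Finset.range q, γ k (f^[i + j * k] x) := by
        have h2' := hiter q i x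
        rw [ha] at h2'
        exact h2'
      have h3 : γ i x ≤ (k:ℝ) * L := by
        refine le_trans (hγub i x) ?_
        have : (i:ℝ) ≤ (k:ℝ) := by exact_mod_cast hik.le
        nlinarith
      have h4 : γ r (f^[i + a] x) ≤ 2 * ((k:ℝ) * L) := by
        refine le_trans (hγub r _) ?_
        have hr2k : r ≤ 2 * k := by omega
        have : (r:ℝ) ≤ 2 * (k:ℝ) := by exact_mod_cast hr2k
        nlinarith
      linarith
    have hsum := Finset.sum_le_sum hper
    rw [Finset.sum_const, Finset.card_range, nsmul_eq_mul] at hsum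
    rw [Finset.sum_add_distrib, Finset.sum_const, Finset.card_range, nsmul_eq_mul] at hsum
    have hreind := aux_sum_reindex (fun l => γ k (f^[l] x)) k q
    rw [ha] at hreind
    rw [hreind] at hsum
    -- tail comparison
    have htail : ∑ l ∈ Finset.range n, γ k (f^[l] x)
        = (∑ l ∈ Finset.range a, γ k (f^[l] x)) + ∑ j ∈ Finset.range s, γ k (f^[a + j] x) := by
      rw [← Finset.sum_range_add, ← hdecomp]
    have htail2 : -(2 * (k:ℝ) * ((k:ℝ) * L)) ≤ ∑ j ∈ Finset.range s, γ k (f^[a + j] x) := by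
      have h5 : ∀ j ∈ Finset.range s, -((k:ℝ) * L) ≤ γ k (f^[a + j] x) :=
        fun j _ => hγlb k _
      have h6 := Finset.sum_le_sum h5
      rw [Finset.sum_const, Finset.card_range, nsmul_eq_mul] at h6
      have h7 : (s:ℝ) ≤ 2 * (k:ℝ) := by exact_mod_cast hs2k
      nlinarith [mul_nonneg (by linarith : (0:ℝ) ≤ 2*(k:ℝ) - (s:ℝ))
        (mul_nonneg hkpos.le hL0)]
    linarith [hsum, htail, htail2]
  -- final constants
  set N₀ : ℕ := max (2 * k) (Nat.ceil (20 * (k:ℝ) * L / ε)) + 1 with hN₀def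
  refine ⟨C₀ + Real.exp (c₀ * N₀), by positivity, c₀, hc₀, ?_⟩
  intro n hn
  by_cases hcase : N₀ ≤ n
  · -- large n : use the inclusion into the large-deviations set
    have hincl : {x | (n:ℝ) * (lam + ε) ≤ γ n x} ⊆
        {x | (n:ℝ) * ((∫ y, Fm m₀ y ∂μ) + (k:ℝ) * ε / 4)
          ≤ ∑ l ∈ Finset.range n, Fm m₀ (f^[l] x)} := by
      intro x hx
      simp only [Set.mem_setOf_eq] at hx ⊢
      have h1 := hkey n (by omega) x
      have h2 : (∑ l ∈ Finset.range n, γ k (f^[l] x))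
          ≤ ∑ l ∈ Finset.range n, Fm m₀ (f^[l] x) :=
        Finset.sum_le_sum fun l _ => hFge m₀ (f^[l] x)
      have h3 : 20 * (k:ℝ) * L / ε ≤ (n:ℝ) := by
        refine le_trans (Nat.le_ceil _) ?_
        have : (Nat.ceil (20 * (k:ℝ) * L / ε)) ≤ n := by omega
        exact_mod_cast this
      have h4 : 20 * (k:ℝ) * L ≤ (n:ℝ) * ε := by
        rw [div_le_iff₀ hε] at h3
        linarith
      have hn0 : (0:ℝ) ≤ (n:ℝ) := Nat.cast_nonneg n
      -- chain of inequalities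
      have h5 : (k:ℝ) * ((n:ℝ) * (lam + ε)) ≤ (k:ℝ) * γ n x :=
        mul_le_mul_of_nonneg_left hx (by positivity)
      have h6 : (∑ l ∈ Finset.range n, Fm m₀ (f^[l] x))
          ≥ (k:ℝ) * ((n:ℝ) * (lam + ε)) - 5 * (k:ℝ) * ((k:ℝ) * L) := by linarith
      have h7 : (n:ℝ) * ((∫ y, Fm m₀ y ∂μ) + (k:ℝ) * ε / 4)
          ≤ (n:ℝ) * ((k:ℝ) * (lam + ε/2) + (k:ℝ) * ε / 4) :=
        mul_le_mul_of_nonneg_left (by linarith) hn0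
      have h8 : (n:ℝ) * ((k:ℝ) * (lam + ε/2) + (k:ℝ) * ε / 4)
          = (k:ℝ) * ((n:ℝ) * (lam + ε)) - (n:ℝ) * (k:ℝ) * ε / 4 := by ring
      have h9 : 5 * (k:ℝ) * ((k:ℝ) * L) ≤ (n:ℝ) * (k:ℝ) * ε / 4 := by
        nlinarith
      linarith
    calc μ {x | (n:ℝ) * (lam + ε) ≤ γ n x}
        ≤ μ {x | (n:ℝ) * ((∫ y, Fm m₀ y ∂μ) + (k:ℝ) * ε / 4)
            ≤ ∑ l ∈ Finset.range n, Fm m₀ (f^[l] x)} := measure_mono hincl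
      _ ≤ ENNReal.ofReal (C₀ * Real.exp (-c₀ * n)) := hbound n hn
      _ ≤ ENNReal.ofReal ((C₀ + Real.exp (c₀ * N₀)) * Real.exp (-c₀ * n)) := by
          refine ENNReal.ofReal_le_ofReal ?_
          have := Real.exp_pos (c₀ * (N₀:ℝ))
          have := Real.exp_pos (-c₀ * (n:ℝ))
          nlinarith
  · -- small n : trivial bound
    push_neg at hcase
    have h1 : μ {x | (n:ℝ) * (lam + ε) ≤ γ n x} ≤ 1 := prob_le_one
    refine le_trans h1 ?_
    rw [← ENNReal.ofReal_one]
    refine ENNReal.ofReal_le_ofReal ?_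
    have hnN : (n:ℝ) ≤ (N₀:ℝ) := by exact_mod_cast hcase.le
    have h2 : Real.exp (c₀ * N₀) * Real.exp (-c₀ * n) = Real.exp (c₀ * ((N₀:ℝ) - n)) := by
      rw [← Real.exp_add]; ring_nf
    have h3 : (1:ℝ) ≤ Real.exp (c₀ * ((N₀:ℝ) - n)) :=
      Real.one_le_exp (by nlinarith)
    have h4 : (0:ℝ) < Real.exp (-c₀ * n) := Real.exp_pos _
    nlinarith [h2, h3, h4, hC₀]
end

section
/- Let d ≥ 1, let η, ν : ℝ → ℝ^d be three times continuously differentiable on a neighbourhood of 0 with η′(0) ≠ 0, and let t ∈ ℝ. Set g s = η s + t • ν s. Then there exist constants C > 0 and s₀ > 0 such that for all s with |s| ≤ s₀: | ‖g s − g 0‖ − (‖g′(0)‖ / ‖η′(0)‖) · ‖η s − η 0‖ | ≤ C · s². -/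
/-- Second-order Taylor bound for a `C³` (in fact `C²` suffices) function near `0`. -/
lemma taylor_bound_aux {d : ℕ} (f : ℝ → EuclideanSpace ℝ (Fin d)) (U : Set ℝ)
    (hUopen : IsOpen U) (hU0 : (0 : ℝ) ∈ U) (hf : ContDiffOn ℝ 3 f U) :
    ∃ C > (0 : ℝ), ∃ s₀ > (0 : ℝ), ∀ s : ℝ, |s| ≤ s₀ →
      ‖f s - f 0 - s • deriv f 0‖ ≤ C * s ^ 2 := by
  obtain ⟨r, hr, hball⟩ := Metric.isOpen_iff.mp hUopen 0 hU0
  have hKsub : Metric.closedBall (0 : ℝ) (r / 2) ⊆ U := fun x hx => hball (by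
    have := Metric.mem_closedBall.mp hx
    exact Metric.mem_ball.mpr (lt_of_le_of_lt this (by linarith)))
  -- deriv f is C¹ on U
  have hf1 : ContDiffOn ℝ 2 (deriv f) U := hf.deriv_of_isOpen hUopen (by norm_num)
  -- second derivative is continuous on U
  have hf2cont : ContinuousOn (deriv (deriv f)) U :=
    hf1.continuousOn_deriv_of_isOpen hUopen (by norm_num)
  have hKcomp : IsCompact (Metric.closedBall (0 : ℝ) (r / 2)) := isCompact_closedBall _ _
  obtain ⟨M, hM⟩ := hKcomp.exists_bound_of_continuousOn (hf2cont.mono hKsub)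
  set M₀ : ℝ := max M 1 with hM₀def
  have hM₀pos : (0 : ℝ) < M₀ := lt_of_lt_of_le one_pos (le_max_right _ _)
  have hM₀ : ∀ x ∈ Metric.closedBall (0 : ℝ) (r / 2), ‖deriv (deriv f) x‖ ≤ M₀ :=
    fun x hx => le_trans (hM x hx) (le_max_left _ _)
  -- deriv f is differentiable on U
  have hdiff1 : ∀ x ∈ U, DifferentiableAt ℝ (deriv f) x := fun x hx =>
    (hf1.differentiableOn (by norm_num)).differentiableAt (hUopen.mem_nhds hx)
  have hdiff0 : ∀ x ∈ U, DifferentiableAt ℝ f x := fun x hx =>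
    (hf.differentiableOn (by norm_num)).differentiableAt (hUopen.mem_nhds hx)
  -- deriv f is M₀-Lipschitz on the closed ball
  have hLip : ∀ x ∈ Metric.closedBall (0 : ℝ) (r / 2),
      ‖deriv f x - deriv f 0‖ ≤ M₀ * ‖x‖ := by
    intro x hx
    have h0 : (0 : ℝ) ∈ Metric.closedBall (0 : ℝ) (r / 2) := by
      simp [Metric.mem_closedBall, le_of_lt (by linarith : (0:ℝ) < r / 2)]
    have := Convex.norm_image_sub_le_of_norm_deriv_le
      (fun y hy => hdiff1 y (hKsub hy)) hM₀ (convex_closedBall _ _) h0 hx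
    simpa using this
  refine ⟨M₀, hM₀pos, r / 2, by linarith, fun s hs => ?_⟩
  -- apply the MVT to h u = f u - u • deriv f 0 on the ball of radius |s|
  have hssub : Metric.closedBall (0 : ℝ) |s| ⊆ Metric.closedBall (0 : ℝ) (r / 2) :=
    Metric.closedBall_subset_closedBall hs
  have hmem : s ∈ Metric.closedBall (0 : ℝ) |s| := by
    simp [Metric.mem_closedBall, Real.dist_eq]
  have h0mem : (0 : ℝ) ∈ Metric.closedBall (0 : ℝ) |s| := by
    simp [Metric.mem_closedBall, abs_nonneg s]
  have key := Convex.norm_image_sub_le_of_norm_hasDerivWithin_le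
    (f := fun u => f u - u • deriv f 0) (f' := fun u => deriv f u - deriv f 0)
    (s := Metric.closedBall (0 : ℝ) |s|) (C := M₀ * |s|)
    (fun x hx => by
      have hxU : x ∈ U := hKsub (hssub hx)
      have h1 : HasDerivAt f (deriv f x) x := (hdiff0 x hxU).hasDerivAt
      have h2 : HasDerivAt (fun u : ℝ => u • deriv f 0) (deriv f 0) x := by
        simpa using (hasDerivAt_id x).smul_const (deriv f 0)
      exact (h1.sub h2).hasDerivWithinAt)
    (fun x hx => by
      have hx' : x ∈ Metric.closedBall (0 : ℝ) (r / 2) := hssub hx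
      have hxle : ‖x‖ ≤ |s| := by
        simpa [Real.norm_eq_abs, Real.dist_eq] using Metric.mem_closedBall.mp hx
      calc ‖deriv f x - deriv f 0‖ ≤ M₀ * ‖x‖ := hLip x hx'
        _ ≤ M₀ * |s| := by nlinarith [norm_nonneg x])
    (convex_closedBall _ _) h0mem hmem
  have : ‖f s - s • deriv f 0 - (f 0 - (0:ℝ) • deriv f 0)‖ ≤ M₀ * |s| * ‖s - 0‖ := key
  have h2 : ‖f s - f 0 - s • deriv f 0‖ ≤ M₀ * |s| * |s| := by
    simpa [Real.norm_eq_abs, sub_sub, add_comm] using this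
  calc ‖f s - f 0 - s • deriv f 0‖ ≤ M₀ * |s| * |s| := h2
    _ = M₀ * s ^ 2 := by rw [mul_assoc, ← abs_mul, ← sq, abs_sq]

/-- If `η, ν : ℝ → ℝ^d` are `C³` on a neighbourhood of `0` with `η′(0) ≠ 0`,
`t ∈ ℝ` and `g s = η s + t • ν s`, then
`‖g s − g 0‖ = (‖g′(0)‖ / ‖η′(0)‖) ‖η s − η 0‖ + O(s²)` near `0`. -/
theorem shifted_front_distance_expansion
    (d : ℕ) (hd : 1 ≤ d) (η ν : ℝ → EuclideanSpace ℝ (Fin d))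
    (U : Set ℝ) (hUopen : IsOpen U) (hU0 : (0 : ℝ) ∈ U)
    (hη : ContDiffOn ℝ 3 η U) (hν : ContDiffOn ℝ 3 ν U)
    (hη' : deriv η 0 ≠ 0) (t : ℝ)
    (g : ℝ → EuclideanSpace ℝ (Fin d)) (hg : g = fun s => η s + t • ν s) :
    ∃ C > (0 : ℝ), ∃ s₀ > (0 : ℝ), ∀ s : ℝ, |s| ≤ s₀ →
      |‖g s - g 0‖ - (‖deriv g 0‖ / ‖deriv η 0‖) * ‖η s - η 0‖| ≤ C * s ^ 2 := by
  have hgC : ContDiffOn ℝ 3 g U := by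
    rw [hg]; exact hη.add (hν.const_smul t)
  obtain ⟨C₁, hC₁, s₁, hs₁, h₁⟩ := taylor_bound_aux g U hUopen hU0 hgC
  obtain ⟨C₂, hC₂, s₂, hs₂, h₂⟩ := taylor_bound_aux η U hUopen hU0 hη
  set R : ℝ := ‖deriv g 0‖ / ‖deriv η 0‖ with hR
  have hRnonneg : 0 ≤ R := div_nonneg (norm_nonneg _) (norm_nonneg _)
  have hηpos : 0 < ‖deriv η 0‖ := norm_pos_iff.mpr hη'
  refine ⟨C₁ + R * C₂ + 1, by positivity, min s₁ s₂, lt_min hs₁ hs₂, fun s hs => ?_⟩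
  have hsa : |s| ≤ s₁ := le_trans hs (min_le_left _ _)
  have hsb : |s| ≤ s₂ := le_trans hs (min_le_right _ _)
  have e₁ : |‖g s - g 0‖ - |s| * ‖deriv g 0‖| ≤ C₁ * s ^ 2 := by
    have := h₁ s hsa
    have tri := abs_norm_sub_norm_le (g s - g 0) (s • deriv g 0)
    rw [norm_smul, Real.norm_eq_abs] at tri
    calc |‖g s - g 0‖ - |s| * ‖deriv g 0‖| ≤ ‖g s - g 0 - s • deriv g 0‖ := tri
      _ ≤ C₁ * s ^ 2 := this
  have e₂ : |‖η s - η 0‖ - |s| * ‖deriv η 0‖| ≤ C₂ * s ^ 2 := by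
    have := h₂ s hsb
    have tri := abs_norm_sub_norm_le (η s - η 0) (s • deriv η 0)
    rw [norm_smul, Real.norm_eq_abs] at tri
    calc |‖η s - η 0‖ - |s| * ‖deriv η 0‖| ≤ ‖η s - η 0 - s • deriv η 0‖ := tri
      _ ≤ C₂ * s ^ 2 := this
  have hkey : R * (|s| * ‖deriv η 0‖) = |s| * ‖deriv g 0‖ := by
    rw [hR, div_mul_eq_mul_div, div_eq_iff hηpos.ne']; ring
  calc |‖g s - g 0‖ - R * ‖η s - η 0‖|
      = |(‖g s - g 0‖ - |s| * ‖deriv g 0‖) - R * (‖η s - η 0‖ - |s| * ‖deriv η 0‖)| := by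
        rw [mul_sub, hkey]; ring_nf
    _ ≤ |‖g s - g 0‖ - |s| * ‖deriv g 0‖| + |R * (‖η s - η 0‖ - |s| * ‖deriv η 0‖)| :=
        abs_sub _ _
    _ = |‖g s - g 0‖ - |s| * ‖deriv g 0‖| + R * |‖η s - η 0‖ - |s| * ‖deriv η 0‖| := by
        rw [abs_mul, abs_of_nonneg hRnonneg]
    _ ≤ C₁ * s ^ 2 + R * (C₂ * s ^ 2) := by
        gcongr
    _ ≤ (C₁ + R * C₂ + 1) * s ^ 2 := by nlinarith [sq_nonneg s]
end

section
/- Let m ∈ ℕ and C > 0, and let ε₀, ε₁, …, ε_{m+1} and δ₀, δ₁, …, δ_m be positive real numbers such that for every j = 0, 1, …, m one has ε_j/δ_j − C·ε_j² ≤ ε_{j+1} ≤ ε_j/δ_j + C·ε_j² and C·δ_j·ε_j < 1. Then ε_{m+1} · ∏_{j=0}^{m} δ_j/(1 + C·δ_j·ε_j) ≤ ε₀ ≤ ε_{m+1} · ∏_{j=0}^{m} δ_j/(1 − C·δ_j·ε_j). -/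
private lemma sandwich_step (C a b d : ℝ) (hC : 0 < C) (ha : 0 < a) (hb : 0 < b)
    (hd : 0 < d) (h1 : a / d - C * a ^ 2 ≤ b) (h2 : b ≤ a / d + C * a ^ 2)
    (hs : C * d * a < 1) :
    b * (d / (1 + C * d * a)) ≤ a ∧ a ≤ b * (d / (1 - C * d * a)) := by
  have hp : 0 < 1 + C * d * a := by positivity
  have hm : 0 < 1 - C * d * a := by linarith
  constructor
  · rw [mul_div_assoc', div_le_iff₀ hp]
    have := (le_div_iff₀ hd).mp (by linarith [h2] : b - C * a ^ 2 ≤ a / d)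
    nlinarith
  · rw [mul_div_assoc', le_div_iff₀ hm]
    have := (div_le_iff₀ hd).mp (by linarith [h1] : a / d ≤ b + C * a ^ 2)
    nlinarith

private lemma sandwich_aux (C : ℝ) (hC : 0 < C) :
    ∀ (m : ℕ) (ε δ : ℕ → ℝ),
    (∀ j ≤ m + 1, 0 < ε j) → (∀ j ≤ m, 0 < δ j) →
    (∀ j ≤ m,
      ε j / δ j - C * (ε j) ^ 2 ≤ ε (j + 1) ∧ ε (j + 1) ≤ ε j / δ j + C * (ε j) ^ 2) →
    (∀ j ≤ m, C * δ j * ε j < 1) →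
    ε (m + 1) * ∏ j ∈ Finset.range (m + 1), δ j / (1 + C * δ j * ε j) ≤ ε 0 ∧
      ε 0 ≤ ε (m + 1) * ∏ j ∈ Finset.range (m + 1), δ j / (1 - C * δ j * ε j) := by
  intro m
  induction m with
  | zero =>
    intro ε δ hε hδ hrec hsmall
    have := sandwich_step C (ε 0) (ε 1) (δ 0) hC (hε 0 (by norm_num)) (hε 1 (by norm_num))
      (hδ 0 le_rfl) (hrec 0 le_rfl).1 (hrec 0 le_rfl).2 (hsmall 0 le_rfl)
    simpa using this
  | succ n ih =>
    intro ε δ hε hδ hrec hsmall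
    have IH := ih ε δ (fun j hj => hε j (by omega)) (fun j hj => hδ j (by omega))
      (fun j hj => hrec j (by omega)) (fun j hj => hsmall j (by omega))
    have hstep := sandwich_step C (ε (n + 1)) (ε (n + 2)) (δ (n + 1)) hC
      (hε (n + 1) (by omega)) (hε (n + 2) (by omega)) (hδ (n + 1) le_rfl)
      (hrec (n + 1) le_rfl).1 (hrec (n + 1) le_rfl).2 (hsmall (n + 1) le_rfl)
    have hprodp : 0 < ∏ j ∈ Finset.range (n + 1), δ j / (1 + C * δ j * ε j) := by
      apply Finset.prod_pos
      intro j hj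
      have hj' := Finset.mem_range.mp hj
      have := hδ j (by omega); have := hε j (by omega)
      positivity
    have hprodm : 0 < ∏ j ∈ Finset.range (n + 1), δ j / (1 - C * δ j * ε j) := by
      apply Finset.prod_pos
      intro j hj
      have hj' := Finset.mem_range.mp hj
      have h1 := hδ j (by omega); have h2 := hε j (by omega)
      have h3 := hsmall j (by omega)
      have : 0 < 1 - C * δ j * ε j := by linarith
      positivity
    rw [Finset.prod_range_succ (fun j => δ j / (1 + C * δ j * ε j)) (n + 1),
      Finset.prod_range_succ (fun j => δ j / (1 - C * δ j * ε j)) (n + 1)]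
    constructor
    · calc ε (n + 2) * ((∏ j ∈ Finset.range (n + 1), δ j / (1 + C * δ j * ε j)) *
          (δ (n + 1) / (1 + C * δ (n + 1) * ε (n + 1))))
          = (ε (n + 2) * (δ (n + 1) / (1 + C * δ (n + 1) * ε (n + 1)))) *
            ∏ j ∈ Finset.range (n + 1), δ j / (1 + C * δ j * ε j) := by ring
        _ ≤ ε (n + 1) * ∏ j ∈ Finset.range (n + 1), δ j / (1 + C * δ j * ε j) := by
            exact mul_le_mul_of_nonneg_right hstep.1 hprodp.le
        _ ≤ ε 0 := IH.1
    · calc ε 0 ≤ ε (n + 1) * ∏ j ∈ Finset.range (n + 1), δ j / (1 - C * δ j * ε j) := IH.2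
        _ ≤ (ε (n + 2) * (δ (n + 1) / (1 - C * δ (n + 1) * ε (n + 1)))) *
            ∏ j ∈ Finset.range (n + 1), δ j / (1 - C * δ j * ε j) := by
            exact mul_le_mul_of_nonneg_right hstep.2 hprodm.le
        _ = ε (n + 2) * ((∏ j ∈ Finset.range (n + 1), δ j / (1 - C * δ j * ε j)) *
            (δ (n + 1) / (1 - C * δ (n + 1) * ε (n + 1)))) := by ring

/-- The recursive sandwich estimate for the expansion of convex fronts:
if positive numbers `ε₀, …, ε_{m+1}` and `δ₀, …, δ_m` satisfy
`ε_j/δ_j − C ε_j² ≤ ε_{j+1} ≤ ε_j/δ_j + C ε_j²` and `C δ_j ε_j < 1` for all `j ≤ m`, then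
`ε_{m+1} ∏_{j=0}^m δ_j/(1 + C δ_j ε_j) ≤ ε₀ ≤ ε_{m+1} ∏_{j=0}^m δ_j/(1 − C δ_j ε_j)`. -/
theorem recursive_sandwich_product_estimate
    (m : ℕ) (C : ℝ) (hC : 0 < C) (ε δ : ℕ → ℝ)
    (hε : ∀ j ≤ m + 1, 0 < ε j) (hδ : ∀ j ≤ m, 0 < δ j)
    (hrec : ∀ j ≤ m,
      ε j / δ j - C * (ε j) ^ 2 ≤ ε (j + 1) ∧ ε (j + 1) ≤ ε j / δ j + C * (ε j) ^ 2)
    (hsmall : ∀ j ≤ m, C * δ j * ε j < 1) :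
    ε (m + 1) * ∏ j ∈ Finset.range (m + 1), δ j / (1 + C * δ j * ε j) ≤ ε 0 ∧
      ε 0 ≤ ε (m + 1) * ∏ j ∈ Finset.range (m + 1), δ j / (1 - C * δ j * ε j) := by
  exact sandwich_aux C hC m ε δ hε hδ hrec hsmall
end
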